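/- Let K be an imaginary quadratic field of discriminant D with ring of integers ℤ[γ], where γ ≠ √-1 and γ ≠ (1+√-3)/2. Let f be a positive integer, ℓ a prime dividing f, and v_ℓ(f) the ℓ-adic valuation of f. Then the number niG(f, ℓ^n) of non-invertible ideals of norm ℓ^n in the order ℤ + ℤfγ satisfies niG(f, ℓ^n) = Σ_{1 ≤ k ≤ min(n, v_ℓ(f))} iG(f/ℓ^k, ℓ^{n-k}), where iG(f', ℓ^m) denotes the number of invertible ideals of norm ℓ^m in the order of conductor f', with the convention that the number of invertible ideals of norm 1 is 1. -/

import Mathlib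

/-- The Kronecker symbol `(D/ℓ)` for a prime `ℓ`: the Legendre symbol for odd
`ℓ`, and for `ℓ = 2` the character `χ₈` (`0` if `D` is even, `1` if
`D ≡ ±1 (mod 8)`, `-1` if `D ≡ ±3 (mod 8)`). -/
noncomputable def kroneckerAtPrime (D : ℤ) (ℓ : ℕ) [Fact ℓ.Prime] : ℤ :=
  if ℓ = 2 then ZMod.χ₈ (D : ZMod 8) else legendreSym ℓ D

/-- The order `ℤ + ℤfγ = ℤ[fγ]` of conductor `f` in the imaginary quadratic
field `K` with ring of integers `ℤ[γ]`. -/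
def quadOrder (K : Type) [Field K] (γ : K) (f : ℕ) : Subalgebra ℤ K :=
  Algebra.adjoin ℤ {(f : K) * γ}

/-- An integral ideal `I` of the order `O = ℤ + ℤfγ` is invertible iff
`{α ∈ K : αI ⊆ I} = O`. -/
def IsInvertibleIdeal (K : Type) [Field K] (γ : K) (f : ℕ)
    (I : Ideal (quadOrder K γ f)) : Prop :=
  {x : K | ∀ y : quadOrder K γ f, y ∈ I →
      x * (y : K) ∈ (Subtype.val '' (I : Set (quadOrder K γ f)) : Set K)} =
    (quadOrder K γ f : Set K)

/-- `iG K γ f ℓ n` is the number of invertible ideals of norm `ℓ^n` in the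
order of conductor `f` of `K`, the norm of an ideal `I` of an order `O` being
the index `[O : I]`. -/
noncomputable def iG (K : Type) [Field K] (γ : K) (f ℓ n : ℕ) : ℕ :=
  Nat.card {I : Ideal (quadOrder K γ f) //
    IsInvertibleIdeal K γ f I ∧ Nat.card (↥(quadOrder K γ f) ⧸ I) = ℓ ^ n}

/-- `niG K γ f ℓ n` is the number of non-invertible ideals of norm `ℓ^n` in
the order of conductor `f` of `K`. -/
noncomputable def niG (K : Type) [Field K] (γ : K) (f ℓ n : ℕ) : ℕ :=
  Nat.card {I : Ideal (quadOrder K γ f) //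
    ¬ IsInvertibleIdeal K γ f I ∧ Nat.card (↥(quadOrder K γ f) ⧸ I) = ℓ ^ n}

namespace Stmt17

variable {K : Type} [Field K]

/-- Context: γ generates the ring of integers, with γ² = tγ - m. -/
structure Ctx (K : Type) [Field K] : Type where
  gam : K
  t : ℤ
  m : ℤ
  rel : gam * gam = (t : K) * gam - (m : K)
  ind : ∀ u v : ℤ, (u : K) + (v : K) * gam = 0 → u = 0 ∧ v = 0
  cls : ∀ x : K, IsIntegral ℤ x → x ∈ Algebra.adjoin ℤ {gam}

theorem adjoin_mem_iff {w : K} {T N : ℤ} (hw : w * w = (T : K) * w - (N : K)) (x : K) :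
    x ∈ Algebra.adjoin ℤ {w} ↔ ∃ u v : ℤ, x = (u : K) + (v : K) * w := by
  constructor
  · intro hx
    induction hx using Algebra.adjoin_induction with
    | mem y hy =>
      rcases Set.mem_singleton_iff.mp hy with rfl
      exact ⟨0, 1, by push_cast; ring⟩
    | algebraMap r => exact ⟨r, 0, by simp [Algebra.algebraMap_eq_smul_one, zsmul_eq_mul]⟩
    | add x y hx hy ihx ihy =>
      obtain ⟨u, v, rfl⟩ := ihx
      obtain ⟨u', v', rfl⟩ := ihy
      exact ⟨u + u', v + v', by push_cast; ring⟩
    | mul x y hx hy ihx ihy =>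
      obtain ⟨u, v, rfl⟩ := ihx
      obtain ⟨u', v', rfl⟩ := ihy
      refine ⟨u * u' - v * v' * N, u * v' + u' * v + v * v' * T, ?_⟩
      push_cast
      linear_combination (v : K) * (v' : K) * hw
  · rintro ⟨u, v, rfl⟩
    exact add_mem (Subalgebra.intCast_mem _ u)
      (mul_mem (Subalgebra.intCast_mem _ v)
        (Algebra.subset_adjoin (Set.mem_singleton w)))

namespace Ctx

variable (C : Ctx K) (d : ℕ)

/-- `w = dγ`. -/
def w : K := (d : K) * C.gam

lemma wrel : C.w d * C.w d = ((d * C.t : ℤ) : K) * C.w d - (((d : ℤ) ^ 2 * C.m : ℤ) : K) := by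
  unfold w; push_cast; linear_combination (d : K) ^ 2 * C.rel

lemma wind (hd : 0 < d) {u v : ℤ} (h : (u : K) + (v : K) * C.w d = 0) : u = 0 ∧ v = 0 := by
  have h2 := C.ind u (v * d) (by unfold w at h; push_cast at h ⊢; linear_combination h)
  refine ⟨h2.1, ?_⟩
  have := h2.2
  have hd' : (d : ℤ) ≠ 0 := by exact_mod_cast hd.ne'
  exact (mul_eq_zero.mp this).resolve_right hd'

lemma mem_quadOrder_iff (x : K) :
    x ∈ quadOrder K C.gam d ↔ ∃ u v : ℤ, x = (u : K) + (v : K) * C.w d :=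
  adjoin_mem_iff (C.wrel d) x

/-- The element `u + v·(dγ)` of the order of conductor `d`. -/
def elt (u v : ℤ) : quadOrder K C.gam d :=
  ⟨(u : K) + (v : K) * C.w d, (C.mem_quadOrder_iff d _).mpr ⟨u, v, rfl⟩⟩

@[simp] lemma elt_val (u v : ℤ) : (C.elt d u v : K) = (u : K) + (v : K) * C.w d := rfl

lemma exists_elt (x : quadOrder K C.gam d) : ∃ u v : ℤ, x = C.elt d u v := by
  obtain ⟨u, v, h⟩ := (C.mem_quadOrder_iff d x.1).mp x.2
  exact ⟨u, v, Subtype.ext h⟩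

lemma elt_inj (hd : 0 < d) {u v u' v' : ℤ} (h : C.elt d u v = C.elt d u' v') :
    u = u' ∧ v = v' := by
  have h' : ((u - u' : ℤ) : K) + ((v - v' : ℤ) : K) * C.w d = 0 := by
    have := congrArg (Subtype.val) h
    simp only [elt_val] at this
    push_cast
    linear_combination this
  have := C.wind d hd h'
  omega

lemma elt_congr {u v u' v' : ℤ} (h1 : u = u') (h2 : v = v') :
    C.elt d u v = C.elt d u' v' := by rw [h1, h2]

lemma elt_add (u v u' v' : ℤ) : C.elt d u v + C.elt d u' v' = C.elt d (u + u') (v + v') := by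
  apply Subtype.ext; simp; push_cast; ring

lemma elt_zsmul (n u v : ℤ) : n • C.elt d u v = C.elt d (n * u) (n * v) := by
  apply Subtype.ext
  simp [zsmul_eq_mul]
  push_cast; ring

lemma elt_nsmul (n : ℕ) (u v : ℤ) : n • C.elt d u v = C.elt d (n * u) (n * v) := by
  have : (n : ℤ) • C.elt d u v = n • C.elt d u v := by simp
  rw [← this, elt_zsmul]

lemma elt_mul (u v u' v' : ℤ) :
    C.elt d u v * C.elt d u' v' =
      C.elt d (u * u' - v * v' * ((d : ℤ) ^ 2 * C.m)) (u * v' + u' * v + v * v' * (d * C.t)) := by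
  apply Subtype.ext
  have hw := C.wrel d
  push_cast at hw
  simp only [Subalgebra.coe_mul, elt_val]
  push_cast
  linear_combination (v : K) * (v' : K) * hw

lemma elt_one : (1 : quadOrder K C.gam d) = C.elt d 1 0 := by
  apply Subtype.ext; simp

lemma elt_zero : (0 : quadOrder K C.gam d) = C.elt d 0 0 := by
  apply Subtype.ext; simp

lemma elt_sub (u v u' v' : ℤ) : C.elt d u v - C.elt d u' v' = C.elt d (u - u') (v - v') := by
  apply Subtype.ext; simp; push_cast; ring

end Ctx

end Stmt17
namespace Stmt17

lemma eq_zero_of_mul_lt {q c : ℤ} (hc : 0 < c) (h1 : -c < q * c) (h2 : q * c < c) : q = 0 := by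
  rcases lt_trichotomy q 0 with h | h | h
  · exfalso
    have : q * c ≤ (-1) * c := mul_le_mul_of_nonneg_right (by omega) hc.le
    linarith
  · exact h
  · exfalso
    have : 1 * c ≤ q * c := mul_le_mul_of_nonneg_right (by omega) hc.le
    linarith

namespace Ctx

variable {K : Type} [Field K] (C : Ctx K) (d : ℕ)

lemma elt_intCast (p : ℤ) : (p : quadOrder K C.gam d) = C.elt d p 0 := by
  apply Subtype.ext; simp

/-- The lattice ideal with HNF data `(a, b, c)`: generated by `a` and `b + cw`. -/
def lat (a b c : ℤ) : Ideal (quadOrder K C.gam d) :=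
  Ideal.span {C.elt d a 0, C.elt d b c}

section latmem

variable {a₀ b₀ c e : ℤ}
variable (hQ : b₀ ^ 2 + (d * C.t) * b₀ + (d : ℤ) ^ 2 * C.m = a₀ * e)

include hQ

lemma mem_lat_iff (x : quadOrder K C.gam d) :
    x ∈ C.lat d (c * a₀) (c * b₀) c ↔
      ∃ p q : ℤ, x = C.elt d (p * (c * a₀) + q * (c * b₀)) (q * c) := by
  set a : ℤ := c * a₀ with ha
  set b : ℤ := c * b₀ with hb
  -- the auxiliary ideal with explicit carrier
  let S : Ideal (quadOrder K C.gam d) :=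
    { carrier := {x | ∃ p q : ℤ, x = C.elt d (p * a + q * b) (q * c)}
      zero_mem' := ⟨0, 0, by rw [elt_zero]; congr 1 <;> ring⟩
      add_mem' := by
        rintro x y ⟨p, q, rfl⟩ ⟨p', q', rfl⟩
        exact ⟨p + p', q + q', by rw [elt_add]; congr 1 <;> ring⟩
      smul_mem' := by
        intro o x hx
        obtain ⟨p, q, rfl⟩ := hx
        obtain ⟨U, V, rfl⟩ := C.exists_elt d o
        refine ⟨U * p - V * (p * b₀ + q * e), U * q + V * (p * a₀ + q * (b₀ + d * C.t)), ?_⟩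
        rw [smul_eq_mul, elt_mul]
        congr 1
        · linear_combination (-(V * q * c)) * hQ
        · ring }
  have hle1 : C.lat d a b c ≤ S := by
    rw [lat, Ideal.span_le]
    rintro x (rfl | rfl)
    · exact ⟨1, 0, by congr 1 <;> ring⟩
    · exact ⟨0, 1, by congr 1 <;> ring⟩
  have hle2 : ∀ x ∈ S, x ∈ C.lat d a b c := by
    rintro x ⟨p, q, rfl⟩
    have : C.elt d (p * a + q * b) (q * c) = (p : quadOrder K C.gam d) * C.elt d a 0
        + (q : quadOrder K C.gam d) * C.elt d b c := by
      rw [elt_intCast, elt_intCast, elt_mul, elt_mul, elt_add]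
      congr 1 <;> ring
    rw [this]
    exact Ideal.add_mem _
      (Ideal.mul_mem_left _ _ (Ideal.subset_span (by simp)))
      (Ideal.mul_mem_left _ _ (Ideal.subset_span (by simp)))
  exact ⟨fun h => hle1 h, fun h => hle2 x h⟩

lemma elt_mem_lat_iff (hd : 0 < d) (X Y : ℤ) :
    C.elt d X Y ∈ C.lat d (c * a₀) (c * b₀) c ↔
      ∃ q : ℤ, Y = q * c ∧ (c * a₀) ∣ (X - q * (c * b₀)) := by
  rw [C.mem_lat_iff d hQ]
  constructor
  · rintro ⟨p, q, h⟩
    have h2 := C.elt_inj d hd h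
    exact ⟨q, h2.2, ⟨p, by linear_combination h2.1⟩⟩
  · rintro ⟨q, hY, p, hp⟩
    refine ⟨p, q, ?_⟩
    rw [show X = p * (c * a₀) + q * (c * b₀) by linear_combination hp, hY]

lemma card_quot_lat (hd : 0 < d) (ha : 0 < a₀) (hc : 0 < c) :
    Nat.card ((quadOrder K C.gam d) ⧸ C.lat d (c * a₀) (c * b₀) c)
      = (c * a₀).toNat * c.toNat := by
  set a : ℤ := c * a₀ with ha'
  set b : ℤ := c * b₀ with hb'
  have hA : 0 < a := mul_pos hc ha
  let f : Fin a.toNat × Fin c.toNat → (quadOrder K C.gam d) ⧸ C.lat d a b c :=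
    fun ij => Submodule.Quotient.mk (C.elt d (ij.1 : ℤ) (ij.2 : ℤ))
  have hbij : Function.Bijective f := by
    constructor
    · rintro ⟨i, j⟩ ⟨i', j'⟩ hij
      have hmem : C.elt d ((i : ℤ) - (i' : ℤ)) ((j : ℤ) - (j' : ℤ)) ∈ C.lat d a b c := by
        rw [← elt_sub]
        exact (Submodule.Quotient.eq _).mp hij
      rw [C.elt_mem_lat_iff d hQ hd] at hmem
      obtain ⟨q, hY, p, hp⟩ := hmem
      have hjc : (j : ℤ) < c := by
        have := j.2
        omega
      have hjc' : (j' : ℤ) < c := by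
        have := j'.2
        omega
      have hq : q = 0 := by
        apply eq_zero_of_mul_lt hc <;> omega
      subst hq
      have hj : (j : ℤ) = (j' : ℤ) := by omega
      have hic : (i : ℤ) < a := by have := i.2; omega
      have hic' : (i' : ℤ) < a := by have := i'.2; omega
      have hp' : (i : ℤ) - (i' : ℤ) = p * a := by linear_combination hp
      have hpz : p = 0 := by
        apply eq_zero_of_mul_lt hA (q := p) <;> omega
      rw [hpz, zero_mul] at hp'
      have h1 : i = i' := Fin.ext (by omega)
      have h2 : j = j' := Fin.ext (by omega)
      rw [h1, h2]
    · intro y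
      obtain ⟨x, rfl⟩ := Submodule.Quotient.mk_surjective _ y
      obtain ⟨u, v, rfl⟩ := C.exists_elt d x
      set q : ℤ := v / c with hq
      set r : ℤ := v % c with hr
      set X : ℤ := (u - q * b) % a with hX
      set p : ℤ := (u - q * b) / a with hp
      have hr0 : 0 ≤ r := Int.emod_nonneg v hc.ne'
      have hrc : r < c := Int.emod_lt_of_pos v hc
      have hX0 : 0 ≤ X := Int.emod_nonneg _ hA.ne'
      have hXa : X < a := Int.emod_lt_of_pos _ hA
      have hv : c * q + r = v := Int.mul_ediv_add_emod v c
      have hu : a * p + X = u - q * b := Int.mul_ediv_add_emod (u - q * b) a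
      refine ⟨⟨⟨X.toNat, by omega⟩, ⟨r.toNat, by omega⟩⟩, ?_⟩
      show Submodule.Quotient.mk (C.elt d ((X.toNat : ℤ)) ((r.toNat : ℤ))) = _
      rw [Int.toNat_of_nonneg hX0, Int.toNat_of_nonneg hr0]
      rw [Submodule.Quotient.eq]
      rw [elt_sub, C.elt_mem_lat_iff d hQ hd]
      exact ⟨-q, by linear_combination hv, ⟨-p, by linear_combination hu⟩⟩
  rw [← Nat.card_eq_of_bijective f hbij]
  simp [Nat.card_eq_fintype_card]

end latmem

end Ctx
end Stmt17
namespace Stmt17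
namespace Ctx

variable {K : Type} [Field K] (C : Ctx K) (d : ℕ)

lemma nsmul_mem_of_card {I : Ideal (quadOrder K C.gam d)} {s : ℕ}
    (hcard : Nat.card ((quadOrder K C.gam d) ⧸ I) = s) (x : quadOrder K C.gam d) :
    s • x ∈ I := by
  have h0 : Nat.card ((quadOrder K C.gam d) ⧸ I) • (Submodule.Quotient.mk x :
      (quadOrder K C.gam d) ⧸ I) = 0 := card_nsmul_eq_zero'
  rw [hcard] at h0
  have h1 : (Submodule.Quotient.mk (s • x) : (quadOrder K C.gam d) ⧸ I) = 0 := by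
    rw [Submodule.Quotient.mk_smul]
    exact h0
  exact (Submodule.Quotient.mk_eq_zero _).mp h1

theorem exists_triple (hd : 0 < d) {I : Ideal (quadOrder K C.gam d)} {s : ℕ} (hs : 0 < s)
    (hcard : Nat.card ((quadOrder K C.gam d) ⧸ I) = s) :
    ∃ a₀ b₀ c e : ℤ, 0 < a₀ ∧ 0 < c ∧ 0 ≤ b₀ ∧ b₀ < a₀ ∧
      (b₀ ^ 2 + (d * C.t) * b₀ + (d : ℤ) ^ 2 * C.m = a₀ * e) ∧
      I = C.lat d (c * a₀) (c * b₀) c ∧ c * c * a₀ = (s : ℤ) := by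
  classical
  have hsmem : ∀ x, s • x ∈ I := C.nsmul_mem_of_card d hcard
  -- minimal positive rational integer in I
  have hP₁ : ∃ n : ℕ, 0 < n ∧ C.elt d (n : ℤ) 0 ∈ I := by
    refine ⟨s, hs, ?_⟩
    have h1 : C.elt d (s : ℤ) 0 = s • C.elt d 1 0 := by
      rw [elt_nsmul]; congr 1 <;> ring
    rw [h1]; exact hsmem _
  set aN := Nat.find hP₁ with haN
  obtain ⟨haNpos, haNmem⟩ := Nat.find_spec hP₁
  -- minimal positive w-coefficient in I
  have hP₂ : ∃ n : ℕ, 0 < n ∧ ∃ b : ℤ, C.elt d b (n : ℤ) ∈ I := by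
    refine ⟨s, hs, 0, ?_⟩
    have h1 : C.elt d 0 (s : ℤ) = s • C.elt d 0 1 := by
      rw [elt_nsmul]; congr 1 <;> ring
    rw [h1]; exact hsmem _
  set cN := Nat.find hP₂ with hcN
  obtain ⟨hcNpos, b', hb'mem⟩ := Nat.find_spec hP₂
  -- divisibility lemmas
  have lem1 : ∀ u : ℤ, C.elt d u 0 ∈ I → (aN : ℤ) ∣ u := by
    intro u hu
    have hmem : C.elt d (u % aN) 0 ∈ I := by
      have h2 : C.elt d (u % aN) 0 = C.elt d u 0 - (u / aN) • C.elt d (aN : ℤ) 0 := by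
        rw [elt_zsmul, elt_sub]
        exact C.elt_congr d (by rw [Int.emod_def]; ring) (by ring)
      rw [h2]; exact sub_mem hu (Submodule.smul_of_tower_mem _ _ haNmem)
    by_contra hdvd
    have hr0 : 0 ≤ u % aN := Int.emod_nonneg u (by exact_mod_cast haNpos.ne')
    have hrA : u % aN < aN := Int.emod_lt_of_pos u (by exact_mod_cast haNpos)
    have hrne : u % aN ≠ 0 := fun h => hdvd (Int.dvd_of_emod_eq_zero h)
    have hlt : (u % aN).toNat < aN := by omega
    exact Nat.find_min hP₁ hlt ⟨by omega, by rw [Int.toNat_of_nonneg hr0]; exact hmem⟩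
  have lem2 : ∀ u v : ℤ, C.elt d u v ∈ I → (cN : ℤ) ∣ v := by
    intro u v huv
    have hmem : C.elt d (u - (v / cN) * b') (v % cN) ∈ I := by
      have h2 : C.elt d (u - (v / cN) * b') (v % cN)
          = C.elt d u v - (v / cN) • C.elt d b' (cN : ℤ) := by
        rw [elt_zsmul, elt_sub]
        exact C.elt_congr d (by ring) (by rw [Int.emod_def]; ring)
      rw [h2]; exact sub_mem huv (Submodule.smul_of_tower_mem _ _ hb'mem)
    by_contra hdvd
    have hr0 : 0 ≤ v % cN := Int.emod_nonneg v (by exact_mod_cast hcNpos.ne')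
    have hrC : v % cN < cN := Int.emod_lt_of_pos v (by exact_mod_cast hcNpos)
    have hrne : v % cN ≠ 0 := fun h => hdvd (Int.dvd_of_emod_eq_zero h)
    have hlt : (v % cN).toNat < cN := by omega
    refine Nat.find_min hP₂ hlt ⟨by omega, u - (v / cN) * b', ?_⟩
    rw [Int.toNat_of_nonneg hr0]; exact hmem
  -- normalize b'
  set b'' := b' % aN with hb''
  have hb''mem : C.elt d b'' (cN : ℤ) ∈ I := by
    have h2 : C.elt d b'' (cN : ℤ) = C.elt d b' (cN : ℤ) - (b' / aN) • C.elt d (aN : ℤ) 0 := by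
      rw [elt_zsmul, elt_sub]
      exact C.elt_congr d (by rw [hb'', Int.emod_def]; ring) (by ring)
    rw [h2]; exact sub_mem hb'mem (Submodule.smul_of_tower_mem _ _ haNmem)
  have hb''0 : 0 ≤ b'' := Int.emod_nonneg b' (by exact_mod_cast haNpos.ne')
  have hb''A : b'' < aN := Int.emod_lt_of_pos b' (by exact_mod_cast haNpos)
  -- c ∣ a
  have hca : (cN : ℤ) ∣ (aN : ℤ) := by
    have hm : C.elt d 0 1 * C.elt d (aN : ℤ) 0 ∈ I := Ideal.mul_mem_left _ _ haNmem
    rw [elt_mul] at hm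
    have := lem2 _ _ hm
    simpa using this
  -- c ∣ b
  have hcb : (cN : ℤ) ∣ b'' := by
    have hm : C.elt d 0 1 * C.elt d b'' (cN : ℤ) ∈ I := Ideal.mul_mem_left _ _ hb''mem
    rw [elt_mul] at hm
    have h3 := lem2 _ _ hm
    have h4 : (0 : ℤ) * (cN : ℤ) + b'' * 1 + 1 * (cN : ℤ) * (d * C.t)
        = b'' + (cN : ℤ) * (d * C.t) := by ring
    rw [h4] at h3
    exact (Int.dvd_add_right ⟨d * C.t, rfl⟩).mp (by rw [add_comm] at h3; exact h3)
  obtain ⟨A0, hA0⟩ := hca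
  obtain ⟨B0, hB0⟩ := hcb
  have hcNZ : (0 : ℤ) < (cN : ℤ) := by exact_mod_cast hcNpos
  have hA0pos : 0 < A0 := by nlinarith [hA0, (by exact_mod_cast haNpos : (0:ℤ) < (aN : ℤ))]
  have hB0nonneg : 0 ≤ B0 := by nlinarith
  have hB0A0 : B0 < A0 := by nlinarith
  -- the quadratic divisibility
  have hz : C.elt d (-(cN : ℤ) * ((d : ℤ) ^ 2 * C.m)) (b'' + (cN : ℤ) * (d * C.t)) ∈ I := by
    have hm : C.elt d 0 1 * C.elt d b'' (cN : ℤ) ∈ I := Ideal.mul_mem_left _ _ hb''mem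
    rw [elt_mul] at hm
    have h4 : C.elt d (0 * b'' - 1 * (cN : ℤ) * ((d : ℤ) ^ 2 * C.m))
        (0 * (cN : ℤ) + b'' * 1 + 1 * (cN : ℤ) * (d * C.t))
        = C.elt d (-(cN : ℤ) * ((d : ℤ) ^ 2 * C.m)) (b'' + (cN : ℤ) * (d * C.t)) := by
      congr 1 <;> ring
    rwa [h4] at hm
  have hz2 : C.elt d (-(cN : ℤ) * ((d : ℤ) ^ 2 * C.m) - (B0 + d * C.t) * b'') 0 ∈ I := by
    have h2 : C.elt d (-(cN : ℤ) * ((d : ℤ) ^ 2 * C.m) - (B0 + d * C.t) * b'') 0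
        = C.elt d (-(cN : ℤ) * ((d : ℤ) ^ 2 * C.m)) (b'' + (cN : ℤ) * (d * C.t))
          - (B0 + d * C.t) • C.elt d b'' (cN : ℤ) := by
      rw [elt_zsmul, elt_sub]
      exact C.elt_congr d (by ring) (by rw [hB0]; ring)
    rw [h2]; exact sub_mem hz (Submodule.smul_of_tower_mem _ _ hb''mem)
  have hdvdQ := lem1 _ hz2
  have hQdvd : A0 ∣ (B0 ^ 2 + (d * C.t) * B0 + (d : ℤ) ^ 2 * C.m) := by
    obtain ⟨k, hk⟩ := hdvdQ
    refine ⟨-k, ?_⟩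
    have hexp : -(cN : ℤ) * ((d : ℤ) ^ 2 * C.m) - (B0 + d * C.t) * b''
        = -(cN : ℤ) * (B0 ^ 2 + (d * C.t) * B0 + (d : ℤ) ^ 2 * C.m) := by
      rw [hB0]; ring
    rw [hexp, hA0] at hk
    have := mul_left_cancel₀ hcNZ.ne' (by linarith [hk] : (cN : ℤ) * (B0 ^ 2 + (d * C.t) * B0
      + (d : ℤ) ^ 2 * C.m) = (cN : ℤ) * (A0 * (-k)))
    exact this
  obtain ⟨e, he⟩ := hQdvd
  -- I = lat
  have hIlat : I = C.lat d ((cN : ℤ) * A0) ((cN : ℤ) * B0) (cN : ℤ) := by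
    apply le_antisymm
    · intro x hx
      obtain ⟨u, v, rfl⟩ := C.exists_elt d x
      obtain ⟨q, hqv⟩ := lem2 u v hx
      have hy : C.elt d (u - q * b'') 0 ∈ I := by
        have h2 : C.elt d (u - q * b'') 0 = C.elt d u v - q • C.elt d b'' (cN : ℤ) := by
          rw [elt_zsmul, elt_sub]
          exact C.elt_congr d (by ring) (by rw [hqv]; ring)
        rw [h2]; exact sub_mem hx (Submodule.smul_of_tower_mem _ _ hb''mem)
      obtain ⟨p, hpu⟩ := lem1 _ hy
      rw [C.elt_mem_lat_iff d he hd]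
      refine ⟨q, by rw [hqv]; ring, ?_⟩
      rw [← hB0]
      exact ⟨p, by rw [← hA0]; linarith⟩
    · rw [lat, Ideal.span_le]
      rintro x (rfl | rfl)
      · rw [← hA0]; exact haNmem
      · rw [← hB0]; exact hb''mem
  refine ⟨A0, B0, (cN : ℤ), e, hA0pos, hcNZ, hB0nonneg, hB0A0, he, hIlat, ?_⟩
  -- the norm identity
  have hc2 := C.card_quot_lat d (e := e) he hd hA0pos hcNZ
  rw [← hIlat, hcard] at hc2
  have h8 : (((cN : ℤ) * A0).toNat : ℤ) = (cN : ℤ) * A0 := Int.toNat_of_nonneg (by positivity)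
  have h9 : (((cN : ℤ)).toNat : ℤ) = (cN : ℤ) := Int.toNat_of_nonneg hcNZ.le
  have h10 : (s : ℤ) = ((cN : ℤ) * A0) * (cN : ℤ) := by
    have h11 := congrArg (Nat.cast : ℕ → ℤ) hc2
    rwa [Nat.cast_mul, h8, h9] at h11
  linear_combination -h10

lemma lat_eq_lat_inj (hd : 0 < d) {a₀ b₀ c e a₀' b₀' c' e' : ℤ}
    (hQ : b₀ ^ 2 + (d * C.t) * b₀ + (d : ℤ) ^ 2 * C.m = a₀ * e)
    (hQ' : b₀' ^ 2 + (d * C.t) * b₀' + (d : ℤ) ^ 2 * C.m = a₀' * e')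
    (ha : 0 < a₀) (hc : 0 < c) (hb0 : 0 ≤ b₀) (hba : b₀ < a₀)
    (ha' : 0 < a₀') (hc' : 0 < c') (hb0' : 0 ≤ b₀') (hba' : b₀' < a₀')
    (heq : C.lat d (c * a₀) (c * b₀) c = C.lat d (c' * a₀') (c' * b₀') c') :
    a₀ = a₀' ∧ b₀ = b₀' ∧ c = c' := by
  -- c = c'
  have hm1 : C.elt d (c' * b₀') (c' : ℤ) ∈ C.lat d (c * a₀) (c * b₀) c := by
    rw [heq, C.elt_mem_lat_iff d hQ' hd]
    exact ⟨1, by ring, ⟨0, by ring⟩⟩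
  have hm2 : C.elt d (c * b₀) (c : ℤ) ∈ C.lat d (c' * a₀') (c' * b₀') c' := by
    rw [← heq, C.elt_mem_lat_iff d hQ hd]
    exact ⟨1, by ring, ⟨0, by ring⟩⟩
  rw [C.elt_mem_lat_iff d hQ hd] at hm1
  rw [C.elt_mem_lat_iff d hQ' hd] at hm2
  obtain ⟨q1, hq1, -⟩ := hm1
  obtain ⟨q2, hq2, -⟩ := hm2
  have hcc' : c = c' := by
    exact Int.dvd_antisymm hc.le hc'.le ⟨q1, by linear_combination hq1⟩
      ⟨q2, by linear_combination hq2⟩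
  subst hcc'
  -- a₀ = a₀'
  have hn1 : C.elt d (c * a₀') 0 ∈ C.lat d (c * a₀) (c * b₀) c := by
    rw [heq, C.elt_mem_lat_iff d hQ' hd]
    exact ⟨0, by ring, ⟨1, by ring⟩⟩
  have hn2 : C.elt d (c * a₀) 0 ∈ C.lat d (c * a₀') (c * b₀') c := by
    rw [← heq, C.elt_mem_lat_iff d hQ hd]
    exact ⟨0, by ring, ⟨1, by ring⟩⟩
  rw [C.elt_mem_lat_iff d hQ hd] at hn1
  rw [C.elt_mem_lat_iff d hQ' hd] at hn2
  obtain ⟨q1', hq1', k1, hk1⟩ := hn1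
  obtain ⟨q2', hq2', k2, hk2⟩ := hn2
  have hq1'0 : q1' = 0 := by
    rcases mul_eq_zero.mp hq1'.symm with h | h
    · exact h
    · omega
  have hq2'0 : q2' = 0 := by
    rcases mul_eq_zero.mp hq2'.symm with h | h
    · exact h
    · omega
  subst hq1'0; subst hq2'0
  have haa' : a₀ = a₀' := by
    have d1 : c * a₀ ∣ c * a₀' := ⟨k1, by linear_combination hk1⟩
    have d2 : c * a₀' ∣ c * a₀ := ⟨k2, by linear_combination hk2⟩
    have := Int.dvd_antisymm (by positivity) (by positivity) d1 d2
    exact mul_left_cancel₀ hc.ne' this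
  subst haa'
  -- b₀ = b₀'
  have ho : C.elt d (c * b₀') (c : ℤ) ∈ C.lat d (c * a₀) (c * b₀) c := by
    rw [heq, C.elt_mem_lat_iff d hQ' hd]
    exact ⟨1, by ring, ⟨0, by ring⟩⟩
  rw [C.elt_mem_lat_iff d hQ hd] at ho
  obtain ⟨q, hq, k, hk⟩ := ho
  have hq1 : q = 1 := by
    have : (1 - q) * c = 0 := by linarith
    rcases mul_eq_zero.mp this with h | h
    · omega
    · omega
  subst hq1
  have hb : c * b₀' - c * b₀ = k * (c * a₀) := by linear_combination hk
  have hk0 : k = 0 := by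
    apply eq_zero_of_mul_lt (c := c * a₀) (by positivity) <;>
      nlinarith [mul_pos hc ha, mul_lt_mul_of_pos_left hba hc,
        mul_nonneg hc.le hb0', mul_nonneg hc.le hb0, mul_lt_mul_of_pos_left hba' hc]
  refine ⟨rfl, ?_, rfl⟩
  rw [hk0, zero_mul] at hb
  have : c * b₀' = c * b₀ := by linarith
  exact (mul_left_cancel₀ hc.ne' this).symm

end Ctx
end Stmt17
namespace Stmt17

lemma dvd_of_gcd3 {a u v x : ℤ} (hg : Int.gcd a (Int.gcd u v : ℤ) = 1)
    (h1 : a ∣ x * u) (h2 : a ∣ x * v) : a ∣ x := by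
  have hab : (Int.gcd u v : ℤ) = u * Int.gcdA u v + v * Int.gcdB u v := Int.gcd_eq_gcd_ab u v
  have h3 : a ∣ x * (Int.gcd u v : ℤ) := by
    have h4 : x * (Int.gcd u v : ℤ) = (x * u) * Int.gcdA u v + (x * v) * Int.gcdB u v := by
      rw [hab]; ring
    rw [h4]
    exact dvd_add (h1.mul_right _) (h2.mul_right _)
  have hab2 : ((Int.gcd a (Int.gcd u v : ℤ) : ℕ) : ℤ)
      = a * Int.gcdA a (Int.gcd u v : ℤ) + (Int.gcd u v : ℤ) * Int.gcdB a (Int.gcd u v : ℤ) :=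
    Int.gcd_eq_gcd_ab _ _
  rw [hg] at hab2
  have hone : (1 : ℤ) = a * Int.gcdA a (Int.gcd u v : ℤ)
      + (Int.gcd u v : ℤ) * Int.gcdB a (Int.gcd u v : ℤ) := by exact_mod_cast hab2
  have h5 : x = a * (x * Int.gcdA a (Int.gcd u v : ℤ))
      + (x * (Int.gcd u v : ℤ)) * Int.gcdB a (Int.gcd u v : ℤ) := by
    linear_combination x * hone
  rw [h5]
  exact dvd_add (dvd_mul_right a _) (h3.mul_right _)

namespace Ctx

variable {K : Type} [Field K] (C : Ctx K) (d : ℕ)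

include C in
lemma intCast_ne_zero {n : ℤ} (hn : n ≠ 0) : ((n : ℤ) : K) ≠ 0 := by
  intro h0
  exact hn (C.ind n 0 (by push_cast; rw [h0]; ring)).1

section inv

variable {a₀ b₀ c e : ℤ}

/-- Invertibility of the lattice ideal is equivalent to primitivity of the associated form. -/
lemma isInv_iff (hd : 0 < d) (ha : 0 < a₀) (hc : 0 < c)
    (hQ : b₀ ^ 2 + (d * C.t) * b₀ + (d : ℤ) ^ 2 * C.m = a₀ * e) :
    IsInvertibleIdeal K C.gam d (C.lat d (c * a₀) (c * b₀) c) ↔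
      Int.gcd a₀ (Int.gcd (2 * b₀ + d * C.t) e : ℤ) = 1 := by
  have hwrel := C.wrel d
  push_cast at hwrel
  have hQK : (b₀ : K) ^ 2 + (d : K) * (C.t : K) * (b₀ : K) + (d : K) ^ 2 * (C.m : K)
      = (a₀ : K) * (e : K) := by exact_mod_cast congrArg (Int.cast : ℤ → K) hQ
  constructor
  · -- invertible → primitive
    intro hinv
    set g : ℕ := Int.gcd a₀ (Int.gcd (2 * b₀ + d * C.t) e : ℤ) with hgdef
    have hga : (g : ℤ) ∣ a₀ := (Int.gcd_dvd_left _ _)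
    have hgs : (g : ℤ) ∣ 2 * b₀ + d * C.t :=
      dvd_trans (Int.gcd_dvd_right _ _) (Int.gcd_dvd_left _ _)
    have hge : (g : ℤ) ∣ e := dvd_trans (Int.gcd_dvd_right _ _) (Int.gcd_dvd_right _ _)
    obtain ⟨A, hA⟩ := hga
    obtain ⟨S, hS⟩ := hgs
    obtain ⟨E, hE⟩ := hge
    have hg0 : (g : ℤ) ≠ 0 := by
      intro h
      have := Int.gcd_eq_zero_iff.mp (by exact_mod_cast h : Int.gcd a₀
        (Int.gcd (2 * b₀ + d * C.t) e : ℤ) = 0)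
      omega
    have hgK : ((g : ℤ) : K) ≠ 0 := C.intCast_ne_zero hg0
    set x₀ : K := (((b₀ : ℤ) : K) + C.w d) / (((g : ℤ)) : K) with hx₀def
    have hx₀mem : x₀ ∈ {x : K | ∀ y : quadOrder K C.gam d, y ∈ C.lat d (c * a₀) (c * b₀) c →
        x * (y : K) ∈ (Subtype.val '' ((C.lat d (c * a₀) (c * b₀) c :
          Set (quadOrder K C.gam d))) : Set K)} := by
      intro y hy
      obtain ⟨p, q, rfl⟩ := (C.mem_lat_iff d hQ y).mp hy
      refine ⟨C.elt d ((-(q * E)) * (c * a₀) + (p * A + q * S) * (c * b₀)) ((p * A + q * S) * c),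
        (C.mem_lat_iff d hQ _).mpr ⟨-(q * E), p * A + q * S, rfl⟩, ?_⟩
      rw [elt_val, elt_val, hx₀def]
      rw [div_mul_eq_mul_div, eq_comm, div_eq_iff hgK]
      have hAK : ((a₀ : ℤ) : K) = ((g : ℤ) : K) * ((A : ℤ) : K) := by
        exact_mod_cast congrArg (Int.cast : ℤ → K) hA
      have hSK : ((2 * b₀ + d * C.t : ℤ) : K) = ((g : ℤ) : K) * ((S : ℤ) : K) := by
        exact_mod_cast congrArg (Int.cast : ℤ → K) hS
      have hEK : ((e : ℤ) : K) = ((g : ℤ) : K) * ((E : ℤ) : K) := by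
        exact_mod_cast congrArg (Int.cast : ℤ → K) hE
      push_cast at hAK hSK hEK ⊢
      linear_combination ((p : K) * (c : K) * (b₀ : K) + (p : K) * (c : K) * C.w d) * hAK
        + ((q : K) * (c : K) * (b₀ : K) + (q : K) * (c : K) * C.w d) * hSK
        + (-((q : K) * (c : K) * (a₀ : K))) * hEK
        + ((q : K) * (c : K)) * hwrel
        + (-((q : K) * (c : K))) * hQK
    rw [IsInvertibleIdeal] at hinv
    rw [hinv] at hx₀mem
    obtain ⟨U, V, hUV⟩ := (C.mem_quadOrder_iff d x₀).mp hx₀mem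
    have hkey : ((b₀ - g * U : ℤ) : K) + ((1 - g * V : ℤ) : K) * C.w d = 0 := by
      have h1 : ((b₀ : ℤ) : K) + C.w d = ((g : ℤ) : K) * x₀ := by
        rw [hx₀def, mul_div_cancel₀ _ hgK]
      rw [hUV] at h1
      push_cast at h1 ⊢
      linear_combination h1
    have h2 := C.wind d hd hkey
    have hdvd1 : (g : ℤ) ∣ 1 := ⟨V, by omega⟩
    have hg1 : (g : ℤ) = 1 := by
      rcases Int.isUnit_iff.mp (isUnit_of_dvd_one hdvd1) with h | h
      · exact h
      · omega
    exact_mod_cast hg1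
  · -- primitive → invertible
    intro hg
    rw [IsInvertibleIdeal]
    ext x
    simp only [Set.mem_setOf_eq, SetLike.mem_coe]
    constructor
    · intro hx
      have hmem0 : C.elt d (c * a₀) 0 ∈ C.lat d (c * a₀) (c * b₀) c :=
        (C.mem_lat_iff d hQ _).mpr ⟨1, 0, C.elt_congr d (by ring) (by ring)⟩
      have hmem1 : C.elt d (c * b₀) c ∈ C.lat d (c * a₀) (c * b₀) c :=
        (C.mem_lat_iff d hQ _).mpr ⟨0, 1, C.elt_congr d (by ring) (by ring)⟩
      obtain ⟨z1, hz1I, hz1v⟩ := hx _ hmem0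
      obtain ⟨z2, hz2I, hz2v⟩ := hx _ hmem1
      obtain ⟨p, q, rfl⟩ := (C.mem_lat_iff d hQ z1).mp hz1I
      obtain ⟨P, Q, rfl⟩ := (C.mem_lat_iff d hQ z2).mp hz2I
      have hca0 : ((c * a₀ : ℤ) : K) ≠ 0 := C.intCast_ne_zero (by positivity)
      have hc0 : (c : ℤ) ≠ 0 := hc.ne'
      have ha0 : (a₀ : ℤ) ≠ 0 := ha.ne'
      have hy1 : ((C.elt d (c * a₀) 0 : quadOrder K C.gam d) : K) = ((c * a₀ : ℤ) : K) := by
        rw [elt_val]; push_cast; ring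
      have h3 : ((c * a₀ : ℤ) : K) * ((C.elt d (P * (c * a₀) + Q * (c * b₀)) (Q * c) :
            quadOrder K C.gam d) : K)
          = ((C.elt d (p * (c * a₀) + q * (c * b₀)) (q * c) : quadOrder K C.gam d) : K)
            * ((C.elt d (c * b₀) c : quadOrder K C.gam d) : K) := by
        rw [hz2v, hz1v, hy1]; ring
      simp only [elt_val] at h3
      have hkey : ((c * (p * (c * a₀) + q * (c * b₀)) * b₀
            - c * (q * c) * ((d : ℤ) ^ 2 * C.m) - (c * a₀) * (P * (c * a₀) + Q * (c * b₀)) : ℤ) : K)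
          + ((c * (p * (c * a₀) + q * (c * b₀)) + c * (q * c) * b₀ + c * (q * c) * (d * C.t)
            - (c * a₀) * (Q * c) : ℤ) : K) * C.w d = 0 := by
        push_cast at h3 ⊢
        linear_combination (-((q : K) * (c : K) * (c : K))) * hwrel - h3
      have h4 := C.wind d hd hkey
      have h5 : c * c * (p * a₀ + q * (2 * b₀ + d * C.t) - a₀ * Q) = 0 := by
        linear_combination h4.2
      have h6 : p * a₀ + q * (2 * b₀ + d * C.t) - a₀ * Q = 0 := by
        rcases mul_eq_zero.mp h5 with h | h
        · exact absurd (mul_eq_zero.mp h) (by push_neg; exact ⟨hc0, hc0⟩)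
        · exact h
      have hdvd2 : a₀ ∣ q * (2 * b₀ + d * C.t) := ⟨Q - p, by linear_combination h6⟩
      have h8 : c * c * (-(q * (b₀ ^ 2 + (d * C.t) * b₀ + (d : ℤ) ^ 2 * C.m)) - P * a₀ ^ 2) = 0 := by
        linear_combination h4.1 - b₀ * h5
      have h9 : -(q * (b₀ ^ 2 + (d * C.t) * b₀ + (d : ℤ) ^ 2 * C.m)) - P * a₀ ^ 2 = 0 := by
        rcases mul_eq_zero.mp h8 with h | h
        · exact absurd (mul_eq_zero.mp h) (by push_neg; exact ⟨hc0, hc0⟩)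
        · exact h
      have h10 : a₀ * (q * e + P * a₀) = 0 := by
        linear_combination (-1 : ℤ) * h9 - q * hQ
      have h11 : q * e + P * a₀ = 0 := by
        rcases mul_eq_zero.mp h10 with h | h
        · exact absurd h ha0
        · exact h
      have hdvd3 : a₀ ∣ q * e := ⟨-P, by linear_combination h11⟩
      obtain ⟨r, hr⟩ := dvd_of_gcd3 hg hdvd2 hdvd3
      refine (C.mem_quadOrder_iff d x).mpr ⟨p + r * b₀, r, ?_⟩
      have hrK : ((q : ℤ) : K) = ((a₀ : ℤ) : K) * ((r : ℤ) : K) := by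
        exact_mod_cast congrArg (Int.cast : ℤ → K) hr
      have h12 : x * ((c * a₀ : ℤ) : K)
          = (((p + r * b₀ : ℤ) : K) + ((r : ℤ) : K) * C.w d) * ((c * a₀ : ℤ) : K) := by
        rw [← hy1, ← hz1v]
        simp only [elt_val]
        push_cast
        push_cast at hrK
        linear_combination ((c : K) * (b₀ : K) + (c : K) * C.w d) * hrK
      exact mul_right_cancel₀ hca0 h12
    · intro hx y hy
      exact ⟨⟨x, hx⟩ * y, Ideal.mul_mem_left _ _ hy, rfl⟩

end inv

end Ctx
end Stmt17
namespace Stmt17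
namespace Ctx

variable {K : Type} [Field K] (C : Ctx K) (d : ℕ)

lemma gcd_dvd_b_and_d (hd : 0 < d) {a₀ b₀ e : ℤ} (ha : 0 < a₀)
    (hQ : b₀ ^ 2 + (d * C.t) * b₀ + (d : ℤ) ^ 2 * C.m = a₀ * e) :
    ((Int.gcd a₀ (Int.gcd (2 * b₀ + d * C.t) e : ℤ) : ℤ) ∣ b₀) ∧
      ((Int.gcd a₀ (Int.gcd (2 * b₀ + d * C.t) e : ℤ) : ℤ) ∣ (d : ℤ)) := by
  have hwrel := C.wrel d
  push_cast at hwrel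
  have hQK : (b₀ : K) ^ 2 + (d : K) * (C.t : K) * (b₀ : K) + (d : K) ^ 2 * (C.m : K)
      = (a₀ : K) * (e : K) := by exact_mod_cast congrArg (Int.cast : ℤ → K) hQ
  set g : ℕ := Int.gcd a₀ (Int.gcd (2 * b₀ + d * C.t) e : ℤ) with hgdef
  have hga : (g : ℤ) ∣ a₀ := (Int.gcd_dvd_left _ _)
  have hgs : (g : ℤ) ∣ 2 * b₀ + d * C.t := dvd_trans (Int.gcd_dvd_right _ _) (Int.gcd_dvd_left _ _)
  have hge : (g : ℤ) ∣ e := dvd_trans (Int.gcd_dvd_right _ _) (Int.gcd_dvd_right _ _)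
  obtain ⟨A, hA⟩ := hga
  obtain ⟨S, hS⟩ := hgs
  obtain ⟨E, hE⟩ := hge
  have hg0 : (g : ℤ) ≠ 0 := by
    intro h
    have := Int.gcd_eq_zero_iff.mp (by exact_mod_cast h : Int.gcd a₀
      (Int.gcd (2 * b₀ + d * C.t) e : ℤ) = 0)
    omega
  have hgK : ((g : ℤ) : K) ≠ 0 := C.intCast_ne_zero hg0
  have hAK : ((a₀ : ℤ) : K) = ((g : ℤ) : K) * ((A : ℤ) : K) := by
    exact_mod_cast congrArg (Int.cast : ℤ → K) hA
  have hSK : ((2 * b₀ + d * C.t : ℤ) : K) = ((g : ℤ) : K) * ((S : ℤ) : K) := by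
    exact_mod_cast congrArg (Int.cast : ℤ → K) hS
  have hEK : ((e : ℤ) : K) = ((g : ℤ) : K) * ((E : ℤ) : K) := by
    exact_mod_cast congrArg (Int.cast : ℤ → K) hE
  set x₀ : K := (((b₀ : ℤ) : K) + C.w d) / (((g : ℤ)) : K) with hx₀def
  set x1 : K := ((a₀ : ℤ) : K) with hx1def
  set x2 : K := ((b₀ : ℤ) : K) + C.w d with hx2def
  set N : Submodule ℤ K := Submodule.span ℤ {x1, x2} with hNdef
  have hx1N : x1 ∈ N := Submodule.subset_span (Set.mem_insert _ _)
  have hx2N : x2 ∈ N := Submodule.subset_span (Set.mem_insert_of_mem _ rfl)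
  have hNbot : N ≠ ⊥ := by
    intro h
    rw [h, Submodule.mem_bot] at hx1N
    exact C.intCast_ne_zero ha.ne' hx1N
  have hNfg : N.FG := Submodule.fg_span (Set.toFinite _)
  -- the two key multiplication identities
  have g1 : x₀ * x1 = (0 : ℤ) • x1 + A • x2 := by
    rw [hx₀def, hx1def, hx2def, div_mul_eq_mul_div, div_eq_iff hgK, zsmul_eq_mul, zsmul_eq_mul]
    push_cast
    push_cast at hAK
    linear_combination (((b₀ : ℤ) : K) + C.w d) * hAK
  have g2 : x₀ * x2 = (-E) • x1 + S • x2 := by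
    rw [hx₀def, hx1def, hx2def, div_mul_eq_mul_div, div_eq_iff hgK, zsmul_eq_mul, zsmul_eq_mul]
    push_cast
    push_cast at hEK hSK
    linear_combination hwrel - hQK - (a₀ : K) * hEK + (((b₀ : ℤ) : K) + C.w d) * hSK
  have hstab : ∀ n ∈ N, x₀ • n ∈ N := by
    intro n hn
    induction hn using Submodule.span_induction with
    | mem y hy =>
      rcases hy with rfl | rfl
      · rw [smul_eq_mul, g1]
        exact add_mem (Submodule.smul_mem _ _ hx1N) (Submodule.smul_mem _ _ hx2N)
      · rw [smul_eq_mul, g2]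
        exact add_mem (Submodule.smul_mem _ _ hx1N) (Submodule.smul_mem _ _ hx2N)
    | zero => rw [smul_zero]; exact Submodule.zero_mem _
    | add y z hy hz ihy ihz => rw [smul_add]; exact add_mem ihy ihz
    | smul z y hy ihy =>
      rw [smul_comm]
      exact Submodule.smul_mem _ _ ihy
  have hint : IsIntegral ℤ x₀ := isIntegral_of_smul_mem_submodule N hNbot hNfg x₀ hstab
  have hx₀adj := C.cls x₀ hint
  obtain ⟨U, V, hUV⟩ := (adjoin_mem_iff C.rel x₀).mp hx₀adj
  have hkey : ((b₀ - g * U : ℤ) : K) + ((d - g * V : ℤ) : K) * C.gam = 0 := by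
    have h1 : ((b₀ : ℤ) : K) + C.w d = ((g : ℤ) : K) * x₀ := by
      rw [hx₀def, mul_div_cancel₀ _ hgK]
    rw [hUV] at h1
    unfold w at h1
    push_cast at h1 ⊢
    linear_combination h1
  have h2 := C.ind _ _ hkey
  exact ⟨⟨U, by omega⟩, ⟨V, by omega⟩⟩

end Ctx
end Stmt17
namespace Stmt17
namespace Ctx

variable {K : Type} [Field K] (C : Ctx K) (d : ℕ)

/-- The quadratic form value `Q_d(b) = b² + dt·b + d²m`. -/
def Qp (b : ℤ) : ℤ := b ^ 2 + (d * C.t) * b + (d : ℤ) ^ 2 * C.m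

/-- The content gcd attached to HNF data. -/
def gc (a₀ b₀ : ℤ) : ℕ := Int.gcd a₀ (Int.gcd (2 * b₀ + d * C.t) (C.Qp d b₀ / a₀) : ℤ)

lemma gc_eq {a₀ b₀ e : ℤ} (ha : a₀ ≠ 0) (hQ : C.Qp d b₀ = a₀ * e) :
    C.gc d a₀ b₀ = Int.gcd a₀ (Int.gcd (2 * b₀ + d * C.t) e : ℤ) := by
  rw [gc, hQ, Int.mul_ediv_cancel_left _ ha]

/-- Triples `(a₀, b₀, c)` encoding the ideals of norm `s` in the order of conductor `d`. -/
def Tri (s : ℕ) : Finset (ℕ × ℕ × ℕ) :=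
  (Finset.range (s + 1) ×ˢ Finset.range (s + 1) ×ˢ Finset.range (s + 1)).filter
    (fun τ => 0 < τ.1 ∧ 0 < τ.2.2 ∧ τ.2.1 < τ.1 ∧ τ.2.2 ^ 2 * τ.1 = s ∧
      (τ.1 : ℤ) ∣ C.Qp d (τ.2.1 : ℤ))

lemma mem_Tri_iff (s : ℕ) (τ : ℕ × ℕ × ℕ) :
    τ ∈ C.Tri d s ↔ 0 < τ.1 ∧ 0 < τ.2.2 ∧ τ.2.1 < τ.1 ∧ τ.2.2 ^ 2 * τ.1 = s ∧
      (τ.1 : ℤ) ∣ C.Qp d (τ.2.1 : ℤ) := by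
  rw [Tri, Finset.mem_filter]
  constructor
  · exact fun h => h.2
  · intro h
    refine ⟨?_, h⟩
    obtain ⟨h1, h2, h3, h4, h5⟩ := h
    have hs : 0 < s := by rw [← h4]; positivity
    have ha : τ.1 ≤ s := Nat.le_of_dvd hs ⟨τ.2.2 ^ 2, by rw [← h4]; ring⟩
    have hc : τ.2.2 ≤ s := Nat.le_of_dvd hs ⟨τ.2.2 * τ.1, by rw [← h4]; ring⟩
    have hb : τ.2.1 ≤ s := by omega
    simp only [Finset.mem_product, Finset.mem_range]
    omega

/-- Master counting lemma: ideals of norm `s` satisfying a predicate `P` matching a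
condition `p` on the content gcd are counted by the triple finset. -/
lemma count_core (hd : 0 < d) {s : ℕ} (hs : 0 < s) (p : ℕ → Prop) [DecidablePred p]
    (P : Ideal (quadOrder K C.gam d) → Prop)
    (hPiff : ∀ a₀ b₀ c e : ℤ, 0 < a₀ → 0 < c → 0 ≤ b₀ → b₀ < a₀ →
      (b₀ ^ 2 + (d * C.t) * b₀ + (d : ℤ) ^ 2 * C.m = a₀ * e) → c * c * a₀ = (s : ℤ) →
      (P (C.lat d (c * a₀) (c * b₀) c) ↔ p (Int.gcd a₀ (Int.gcd (2 * b₀ + d * C.t) e : ℤ)))) :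
    Nat.card {I : Ideal (quadOrder K C.gam d) //
        P I ∧ Nat.card ((quadOrder K C.gam d) ⧸ I) = s}
      = ((C.Tri d s).filter (fun τ => p (C.gc d (τ.1 : ℤ) (τ.2.1 : ℤ)))).card := by
  classical
  set T : Finset (ℕ × ℕ × ℕ) := (C.Tri d s).filter (fun τ => p (C.gc d (τ.1 : ℤ) (τ.2.1 : ℤ)))
    with hT
  -- data extraction from membership
  have hcond : ∀ τ ∈ T, (0 < τ.1 ∧ 0 < τ.2.2 ∧ τ.2.1 < τ.1 ∧ τ.2.2 ^ 2 * τ.1 = s ∧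
      (τ.1 : ℤ) ∣ C.Qp d (τ.2.1 : ℤ)) ∧ p (C.gc d (τ.1 : ℤ) (τ.2.1 : ℤ)) := by
    intro τ hτ
    rw [hT, Finset.mem_filter, C.mem_Tri_iff d] at hτ
    exact hτ
  -- the map from triples to ideals
  have key : ∀ τ ∈ T, P (C.lat d ((τ.2.2 : ℤ) * (τ.1 : ℤ)) ((τ.2.2 : ℤ) * (τ.2.1 : ℤ))
        (τ.2.2 : ℤ)) ∧
      Nat.card ((quadOrder K C.gam d) ⧸ C.lat d ((τ.2.2 : ℤ) * (τ.1 : ℤ))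
        ((τ.2.2 : ℤ) * (τ.2.1 : ℤ)) (τ.2.2 : ℤ)) = s := by
    rintro ⟨a₀, b₀, c⟩ hτ
    obtain ⟨⟨h1, h2, h3, h4, h5⟩, hp⟩ := hcond _ hτ
    simp only at h1 h2 h3 h4 h5 hp ⊢
    obtain ⟨e, he⟩ := h5
    have hQe : (b₀ : ℤ) ^ 2 + (d * C.t) * (b₀ : ℤ) + (d : ℤ) ^ 2 * C.m = (a₀ : ℤ) * e := he
    have ha' : (0 : ℤ) < (a₀ : ℤ) := by exact_mod_cast h1
    have hc' : (0 : ℤ) < (c : ℤ) := by exact_mod_cast h2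
    constructor
    · rw [hPiff (a₀ : ℤ) (b₀ : ℤ) (c : ℤ) e ha' hc' (by positivity) (by exact_mod_cast h3) hQe
        (by exact_mod_cast (by rw [← h4]; ring : c * c * a₀ = s))]
      rwa [C.gc_eq d ha'.ne' hQe] at hp
    · rw [C.card_quot_lat d hQe hd ha' hc']
      have e1 : ((c : ℤ) * (a₀ : ℤ)).toNat = c * a₀ := by
        rw [show (c : ℤ) * (a₀ : ℤ) = ((c * a₀ : ℕ) : ℤ) by push_cast; ring, Int.toNat_natCast]
      have e2 : ((c : ℤ)).toNat = c := Int.toNat_natCast c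
      rw [e1, e2]
      rw [← h4]; ring
  let F : {τ // τ ∈ T} → {I : Ideal (quadOrder K C.gam d) //
      P I ∧ Nat.card ((quadOrder K C.gam d) ⧸ I) = s} :=
    fun τ => ⟨C.lat d ((τ.1.2.2 : ℤ) * (τ.1.1 : ℤ)) ((τ.1.2.2 : ℤ) * (τ.1.2.1 : ℤ))
      (τ.1.2.2 : ℤ), key τ.1 τ.2⟩
  have hbij : Function.Bijective F := by
    constructor
    · rintro ⟨⟨a₀, b₀, c⟩, hτ⟩ ⟨⟨a₀', b₀', c'⟩, hτ'⟩ hFF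
      obtain ⟨⟨h1, h2, h3, h4, h5⟩, hp⟩ := hcond _ hτ
      obtain ⟨⟨h1', h2', h3', h4', h5'⟩, hp'⟩ := hcond _ hτ'
      simp only at h1 h2 h3 h4 h5 hp h1' h2' h3' h4' h5' hp'
      obtain ⟨e, he⟩ := h5
      obtain ⟨e', he'⟩ := h5'
      have hlat : C.lat d ((c : ℤ) * (a₀ : ℤ)) ((c : ℤ) * (b₀ : ℤ)) (c : ℤ)
          = C.lat d ((c' : ℤ) * (a₀' : ℤ)) ((c' : ℤ) * (b₀' : ℤ)) (c' : ℤ) := by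
        have := congrArg Subtype.val hFF
        simpa [F] using this
      have := C.lat_eq_lat_inj d hd he he'
        (by exact_mod_cast h1) (by exact_mod_cast h2) (by positivity) (by exact_mod_cast h3)
        (by exact_mod_cast h1') (by exact_mod_cast h2') (by positivity) (by exact_mod_cast h3')
        hlat
      obtain ⟨ea, eb, ec⟩ := this
      apply Subtype.ext
      have : a₀ = a₀' := by exact_mod_cast ea
      have : b₀ = b₀' := by exact_mod_cast eb
      have : c = c' := by exact_mod_cast ec
      simp_all
    · rintro ⟨I, hPI, hcardI⟩
      obtain ⟨a₀, b₀, c, e, ha, hc, hb0, hba, hQ, hIlat, hnorm⟩ :=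
        C.exists_triple d hd hs hcardI
      refine ⟨⟨(a₀.toNat, b₀.toNat, c.toNat), ?_⟩, ?_⟩
      · rw [hT, Finset.mem_filter, C.mem_Tri_iff d]
        have e1 : ((a₀.toNat : ℤ)) = a₀ := Int.toNat_of_nonneg ha.le
        have e2 : ((b₀.toNat : ℤ)) = b₀ := Int.toNat_of_nonneg hb0
        have e3 : ((c.toNat : ℤ)) = c := Int.toNat_of_nonneg hc.le
        refine ⟨⟨by show 0 < a₀.toNat; omega, by show 0 < c.toNat; omega,
          by show b₀.toNat < a₀.toNat; omega, ?_, ?_⟩, ?_⟩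
        · show c.toNat ^ 2 * a₀.toNat = s
          have : ((c.toNat ^ 2 * a₀.toNat : ℕ) : ℤ) = (s : ℤ) := by
            push_cast
            rw [e1, e3]
            linear_combination hnorm
          exact_mod_cast this
        · show ((a₀.toNat : ℤ)) ∣ C.Qp d ((b₀.toNat : ℤ))
          rw [e1, e2]
          exact ⟨e, hQ⟩
        · show p (C.gc d ((a₀.toNat : ℤ)) ((b₀.toNat : ℤ)))
          rw [e1, e2, C.gc_eq d ha.ne' hQ]
          rw [hIlat] at hPI
          exact (hPiff a₀ b₀ c e ha hc hb0 hba hQ hnorm).mp hPI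
      · apply Subtype.ext
        simp only [F]
        rw [Int.toNat_of_nonneg ha.le, Int.toNat_of_nonneg hb0, Int.toNat_of_nonneg hc.le]
        exact hIlat.symm
  calc Nat.card {I : Ideal (quadOrder K C.gam d) //
        P I ∧ Nat.card ((quadOrder K C.gam d) ⧸ I) = s}
      = Nat.card {τ // τ ∈ T} := (Nat.card_eq_of_bijective F hbij).symm
    _ = T.card := Nat.card_eq_finsetCard T

lemma count_inv (hd : 0 < d) {s : ℕ} (hs : 0 < s) :
    Nat.card {I : Ideal (quadOrder K C.gam d) //
        IsInvertibleIdeal K C.gam d I ∧ Nat.card ((quadOrder K C.gam d) ⧸ I) = s}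
      = ((C.Tri d s).filter (fun τ => C.gc d (τ.1 : ℤ) (τ.2.1 : ℤ) = 1)).card := by
  exact C.count_core d hd hs (fun g => g = 1) _
    (fun a₀ b₀ c e ha hc hb0 hba hQ hnorm => C.isInv_iff d hd ha hc hQ)

lemma count_noninv (hd : 0 < d) {s : ℕ} (hs : 0 < s) :
    Nat.card {I : Ideal (quadOrder K C.gam d) //
        ¬ IsInvertibleIdeal K C.gam d I ∧ Nat.card ((quadOrder K C.gam d) ⧸ I) = s}
      = ((C.Tri d s).filter (fun τ => C.gc d (τ.1 : ℤ) (τ.2.1 : ℤ) ≠ 1)).card := by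
  exact C.count_core d hd hs (fun g => g ≠ 1) _
    (fun a₀ b₀ c e ha hc hb0 hba hQ hnorm => not_congr (C.isInv_iff d hd ha hc hQ))

end Ctx
end Stmt17
namespace Stmt17
namespace Ctx

variable {K : Type} [Field K] (C : Ctx K)

lemma Qp_scale (m d : ℕ) (b : ℤ) :
    C.Qp (m * d) ((m : ℤ) * b) = (m : ℤ) ^ 2 * C.Qp d b := by
  unfold Qp; push_cast; ring

/-- Structure of a triple: its content divides everything in sight. -/
lemma gc_dvds (f s : ℕ) (hf : 0 < f) {τ : ℕ × ℕ × ℕ} (hτ : τ ∈ C.Tri f s) :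
    (C.gc f (τ.1 : ℤ) (τ.2.1 : ℤ)) ∣ τ.1 ∧ (C.gc f (τ.1 : ℤ) (τ.2.1 : ℤ)) ∣ τ.2.1 ∧
      (C.gc f (τ.1 : ℤ) (τ.2.1 : ℤ)) ∣ f ∧
      ∃ e : ℤ, C.Qp f (τ.2.1 : ℤ) = (τ.1 : ℤ) * e ∧
        ((C.gc f (τ.1 : ℤ) (τ.2.1 : ℤ) : ℕ) : ℤ) ∣ e := by
  rw [C.mem_Tri_iff f] at hτ
  obtain ⟨h1, h2, h3, h4, h5⟩ := hτ
  obtain ⟨e, he⟩ := h5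
  have ha0 : ((τ.1 : ℕ) : ℤ) ≠ 0 := by exact_mod_cast h1.ne'
  have hgeq := C.gc_eq f ha0 he
  have hga : ((C.gc f (τ.1 : ℤ) (τ.2.1 : ℤ) : ℕ) : ℤ) ∣ (τ.1 : ℤ) := by
    rw [hgeq]; exact (Int.gcd_dvd_left _ _)
  have hge : ((C.gc f (τ.1 : ℤ) (τ.2.1 : ℤ) : ℕ) : ℤ) ∣ e := by
    rw [hgeq]; exact dvd_trans (Int.gcd_dvd_right _ _) (Int.gcd_dvd_right _ _)
  have hbd := C.gcd_dvd_b_and_d f hf (by exact_mod_cast h1) he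
  refine ⟨by exact_mod_cast hga, ?_, ?_, e, he, hge⟩
  · have h6 := hbd.1; rw [← hgeq] at h6; exact_mod_cast h6
  · have h6 := hbd.2; rw [← hgeq] at h6; exact_mod_cast h6

/-- The gcd of a scaled triple scales. -/
lemma gcd3_scale (m : ℕ) (x y z : ℤ) :
    Int.gcd ((m : ℤ) * x) (Int.gcd ((m : ℤ) * y) ((m : ℤ) * z) : ℤ)
      = m * Int.gcd x (Int.gcd y z : ℤ) := by
  have h1 : Int.gcd ((m : ℤ) * y) ((m : ℤ) * z) = m * Int.gcd y z := by
    rw [Int.gcd_mul_left]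
    simp
  rw [h1]
  have h2 : ((m * Int.gcd y z : ℕ) : ℤ) = (m : ℤ) * (Int.gcd y z : ℤ) := by push_cast; ring
  rw [h2, Int.gcd_mul_left]
  simp

lemma count_split (f ℓ n : ℕ) (hf : 0 < f) (hℓ : ℓ.Prime) :
    ((C.Tri f (ℓ ^ n)).filter (fun τ => C.gc f (τ.1 : ℤ) (τ.2.1 : ℤ) ≠ 1)).card
      = ∑ k ∈ Finset.Icc 1 (min n (padicValNat ℓ f)),
          ((C.Tri (f / ℓ ^ k) (ℓ ^ (n - k))).filter
            (fun τ => C.gc (f / ℓ ^ k) (τ.1 : ℤ) (τ.2.1 : ℤ) = 1)).card := by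
  classical
  haveI : Fact ℓ.Prime := ⟨hℓ⟩
  have hℓ1 : 1 < ℓ := hℓ.one_lt
  have key : ∀ τ ∈ (C.Tri f (ℓ ^ n)).filter (fun τ => C.gc f (τ.1 : ℤ) (τ.2.1 : ℤ) ≠ 1),
      padicValNat ℓ (C.gc f (τ.1 : ℤ) (τ.2.1 : ℤ)) ∈
          Finset.Icc 1 (min n (padicValNat ℓ f)) ∧
        C.gc f (τ.1 : ℤ) (τ.2.1 : ℤ)
          = ℓ ^ (padicValNat ℓ (C.gc f (τ.1 : ℤ) (τ.2.1 : ℤ))) := by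
    intro τ hτ
    rw [Finset.mem_filter] at hτ
    obtain ⟨hmem, hne⟩ := hτ
    obtain ⟨hga, hgb, hgf, e, he, hge⟩ := C.gc_dvds f (ℓ ^ n) hf hmem
    rw [C.mem_Tri_iff f] at hmem
    obtain ⟨h1, h2, h3, h4, h5⟩ := hmem
    have hgn : C.gc f (τ.1 : ℤ) (τ.2.1 : ℤ) ∣ ℓ ^ n :=
      hga.trans ⟨τ.2.2 ^ 2, by rw [← h4]; ring⟩
    obtain ⟨k, hkn, hgk⟩ := (Nat.dvd_prime_pow hℓ).mp hgn
    have hk1 : 1 ≤ k := by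
      rcases Nat.eq_zero_or_pos k with rfl | h
      · rw [pow_zero] at hgk; exact absurd hgk hne
      · exact h
    have hkv : k ≤ padicValNat ℓ f := by
      rw [← padicValNat_dvd_iff_le hf.ne', ← hgk]
      exact hgf
    rw [hgk, padicValNat.prime_pow]
    exact ⟨Finset.mem_Icc.mpr ⟨hk1, le_min hkn hkv⟩, rfl⟩
  rw [Finset.card_eq_sum_card_fiberwise (fun τ hτ => (key τ hτ).1)]
  refine Finset.sum_congr rfl ?_
  intro k hk
  rw [Finset.mem_Icc] at hk
  obtain ⟨hk1, hkm⟩ := hk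
  have hkn : k ≤ n := le_trans hkm (min_le_left _ _)
  have hkv : k ≤ padicValNat ℓ f := le_trans hkm (min_le_right _ _)
  have hdvdf : ℓ ^ k ∣ f := dvd_trans (pow_dvd_pow ℓ hkv) pow_padicValNat_dvd
  set d := f / ℓ ^ k with hddef
  have hfd : f = ℓ ^ k * d := (Nat.mul_div_cancel' hdvdf).symm
  have hlk0 : 0 < ℓ ^ k := pow_pos hℓ.pos _
  have hlkZ : ((ℓ ^ k : ℕ) : ℤ) ≠ 0 := by positivity
  have hlk1 : 1 < ℓ ^ k := by
    calc 1 < ℓ := hℓ1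
    _ = ℓ ^ 1 := (pow_one ℓ).symm
    _ ≤ ℓ ^ k := Nat.pow_le_pow_right hℓ.pos hk1
  have hd0 : 0 < d := by
    rcases Nat.eq_zero_or_pos d with h | h
    · rw [h, mul_zero] at hfd; omega
    · exact h
  have hfZ : (f : ℤ) = ((ℓ ^ k : ℕ) : ℤ) * (d : ℤ) := by
    exact_mod_cast congrArg (Nat.cast : ℕ → ℤ) hfd
  have hpow : ℓ ^ k * ℓ ^ (n - k) = ℓ ^ n := by
    rw [← pow_add]
    congr 1
    omega
  rw [Finset.filter_filter]
  refine Finset.card_bij' (fun τ _ => (τ.1 / ℓ ^ k, τ.2.1 / ℓ ^ k, τ.2.2))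
    (fun τ _ => (ℓ ^ k * τ.1, ℓ ^ k * τ.2.1, τ.2.2)) ?_ ?_ ?_ ?_
  · -- forward map lands in the target
    rintro ⟨a₀, b₀, c⟩ hτ
    rw [Finset.mem_filter] at hτ
    obtain ⟨hmem, hne, hval⟩ := hτ
    have hgk : C.gc f ((a₀ : ℕ) : ℤ) ((b₀ : ℕ) : ℤ) = ℓ ^ k := by
      have h := (key _ (Finset.mem_filter.mpr ⟨hmem, hne⟩)).2
      simp only at h hval ⊢
      rw [h, hval]
    obtain ⟨hga, hgb, hgf, e, he, hge⟩ := C.gc_dvds f (ℓ ^ n) hf hmem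
    simp only at hga hgb hgf he hge
    rw [hgk] at hga hgb hge
    rw [C.mem_Tri_iff f] at hmem
    obtain ⟨h1, h2, h3, h4, h5⟩ := hmem
    simp only at h1 h2 h3 h4 h5
    obtain ⟨A, hA⟩ := hga
    obtain ⟨B, hB⟩ := hgb
    obtain ⟨E, hE⟩ := hge
    have hAZ : ((a₀ : ℕ) : ℤ) = ((ℓ ^ k : ℕ) : ℤ) * (A : ℤ) := by
      exact_mod_cast congrArg (Nat.cast : ℕ → ℤ) hA
    have hBZ : ((b₀ : ℕ) : ℤ) = ((ℓ ^ k : ℕ) : ℤ) * (B : ℤ) := by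
      exact_mod_cast congrArg (Nat.cast : ℕ → ℤ) hB
    have hA0 : 0 < A := by
      rcases Nat.eq_zero_or_pos A with h | h
      · rw [h, mul_zero] at hA; omega
      · exact h
    simp only
    rw [Finset.mem_filter]
    have hdivA : a₀ / ℓ ^ k = A := by rw [hA]; exact Nat.mul_div_cancel_left A hlk0
    have hdivB : b₀ / ℓ ^ k = B := by rw [hB]; exact Nat.mul_div_cancel_left B hlk0
    rw [hdivA, hdivB]
    have h7 : C.Qp f (b₀ : ℤ) = ((ℓ ^ k : ℕ) : ℤ) ^ 2 * C.Qp d (B : ℤ) := by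
      rw [hBZ, hfd]
      exact C.Qp_scale (ℓ ^ k) d (B : ℤ)
    have hQd : C.Qp d (B : ℤ) = (A : ℤ) * E := by
      refine mul_left_cancel₀ (pow_ne_zero 2 hlkZ) ?_
      rw [← h7, he, hE, hAZ]
      ring
    have hgnew : C.gc d (A : ℤ) (B : ℤ) = 1 := by
      have hA0Z : ((A : ℕ) : ℤ) ≠ 0 := by exact_mod_cast hA0.ne'
      have h8 : ℓ ^ k = ℓ ^ k * C.gc d (A : ℤ) (B : ℤ) := by
        calc ℓ ^ k = C.gc f ((a₀ : ℕ) : ℤ) ((b₀ : ℕ) : ℤ) := hgk.symm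
        _ = Int.gcd ((a₀ : ℕ) : ℤ) (Int.gcd (2 * ((b₀ : ℕ) : ℤ) + f * C.t) e : ℤ) :=
            C.gc_eq f (by exact_mod_cast h1.ne') he
        _ = Int.gcd (((ℓ ^ k : ℕ) : ℤ) * (A : ℤ))
              (Int.gcd (((ℓ ^ k : ℕ) : ℤ) * (2 * (B : ℤ) + d * C.t))
                (((ℓ ^ k : ℕ) : ℤ) * E) : ℤ) := by
            rw [hAZ, hBZ, hE, hfZ]
            congr 2
            ring
        _ = ℓ ^ k * Int.gcd (A : ℤ) (Int.gcd (2 * (B : ℤ) + d * C.t) E : ℤ) :=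
            gcd3_scale (ℓ ^ k) _ _ _
        _ = ℓ ^ k * C.gc d (A : ℤ) (B : ℤ) := by rw [C.gc_eq d hA0Z hQd]
      have := Nat.eq_of_mul_eq_mul_left hlk0 (by omega : ℓ ^ k * 1 = ℓ ^ k * C.gc d (A:ℤ) (B:ℤ))
      omega
    refine ⟨(C.mem_Tri_iff d _ _).mpr ⟨hA0, h2, ?_, ?_, ⟨E, hQd⟩⟩, hgnew⟩
    · rw [hA, hB] at h3
      exact Nat.lt_of_mul_lt_mul_left h3
    · refine Nat.eq_of_mul_eq_mul_left hlk0 ?_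
      calc ℓ ^ k * (c ^ 2 * A) = c ^ 2 * (ℓ ^ k * A) := by ring
      _ = c ^ 2 * a₀ := by rw [← hA]
      _ = ℓ ^ n := h4
      _ = ℓ ^ k * ℓ ^ (n - k) := hpow.symm
  · -- backward map lands in the fiber
    rintro ⟨A, B, c⟩ hτ
    rw [Finset.mem_filter] at hτ
    obtain ⟨hmem, hone⟩ := hτ
    rw [C.mem_Tri_iff d] at hmem
    obtain ⟨h1, h2, h3, h4, h5⟩ := hmem
    simp only at h1 h2 h3 h4 h5 hone
    obtain ⟨e', he'⟩ := h5
    have hA0Z : ((A : ℕ) : ℤ) ≠ 0 := by exact_mod_cast h1.ne'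
    have hgA : C.gc d (A : ℤ) (B : ℤ) = 1 := hone
    -- compute the scaled quadratic relation
    have h7 : C.Qp f (((ℓ ^ k * B : ℕ) : ℤ)) = ((ℓ ^ k : ℕ) : ℤ) ^ 2 * C.Qp d (B : ℤ) := by
      rw [show (((ℓ ^ k * B : ℕ) : ℤ)) = ((ℓ ^ k : ℕ) : ℤ) * (B : ℤ) by push_cast; ring, hfd]
      exact C.Qp_scale (ℓ ^ k) d (B : ℤ)
    have hQf : C.Qp f (((ℓ ^ k * B : ℕ) : ℤ))
        = (((ℓ ^ k * A : ℕ) : ℤ)) * (((ℓ ^ k : ℕ) : ℤ) * e') := by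
      rw [h7, he']
      push_cast
      ring
    have hgscaled : C.gc f (((ℓ ^ k * A : ℕ) : ℤ)) (((ℓ ^ k * B : ℕ) : ℤ)) = ℓ ^ k := by
      have hA0Z' : (((ℓ ^ k * A : ℕ) : ℤ)) ≠ 0 := by
        have : 0 < ℓ ^ k * A := Nat.mul_pos hlk0 h1
        exact_mod_cast this.ne'
      rw [C.gc_eq f hA0Z' hQf]
      have e1 : (((ℓ ^ k * A : ℕ) : ℤ)) = ((ℓ ^ k : ℕ) : ℤ) * (A : ℤ) := by push_cast; ring
      have e2 : 2 * (((ℓ ^ k * B : ℕ) : ℤ)) + (f : ℤ) * C.t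
          = ((ℓ ^ k : ℕ) : ℤ) * (2 * (B : ℤ) + d * C.t) := by rw [hfZ]; push_cast; ring
      calc Int.gcd (((ℓ ^ k * A : ℕ) : ℤ))
            (Int.gcd (2 * (((ℓ ^ k * B : ℕ) : ℤ)) + f * C.t) (((ℓ ^ k : ℕ) : ℤ) * e') : ℤ)
          = Int.gcd (((ℓ ^ k : ℕ) : ℤ) * (A : ℤ))
              (Int.gcd (((ℓ ^ k : ℕ) : ℤ) * (2 * (B : ℤ) + d * C.t))
                (((ℓ ^ k : ℕ) : ℤ) * e') : ℤ) := by rw [e1, e2]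
        _ = ℓ ^ k * Int.gcd (A : ℤ) (Int.gcd (2 * (B : ℤ) + d * C.t) e' : ℤ) :=
            gcd3_scale (ℓ ^ k) _ _ _
        _ = ℓ ^ k * C.gc d (A : ℤ) (B : ℤ) := by rw [C.gc_eq d hA0Z he']
        _ = ℓ ^ k := by rw [hgA, mul_one]
    simp only
    rw [Finset.mem_filter]
    refine ⟨(C.mem_Tri_iff f _ _).mpr ⟨Nat.mul_pos hlk0 h1, h2, ?_, ?_,
      ⟨((ℓ ^ k : ℕ) : ℤ) * e', hQf⟩⟩, ?_, ?_⟩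
    · exact mul_lt_mul_of_pos_left h3 hlk0
    · calc c ^ 2 * (ℓ ^ k * A) = ℓ ^ k * (c ^ 2 * A) := by ring
      _ = ℓ ^ k * ℓ ^ (n - k) := by rw [h4]
      _ = ℓ ^ n := hpow
    · rw [hgscaled]; omega
    · rw [hgscaled]
      exact padicValNat.prime_pow k
  · -- left inverse
    rintro ⟨a₀, b₀, c⟩ hτ
    rw [Finset.mem_filter] at hτ
    obtain ⟨hmem, hne, hval⟩ := hτ
    have hgk : C.gc f ((a₀ : ℕ) : ℤ) ((b₀ : ℕ) : ℤ) = ℓ ^ k := by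
      have h := (key _ (Finset.mem_filter.mpr ⟨hmem, hne⟩)).2
      simp only at h hval ⊢
      rw [h, hval]
    obtain ⟨hga, hgb, -, -⟩ := C.gc_dvds f (ℓ ^ n) hf hmem
    simp only at hga hgb
    rw [hgk] at hga hgb
    simp only
    rw [Nat.mul_div_cancel' hga, Nat.mul_div_cancel' hgb]
  · -- right inverse
    rintro ⟨A, B, c⟩ hτ
    simp only
    rw [Nat.mul_div_cancel_left A hlk0, Nat.mul_div_cancel_left B hlk0]

end Ctx
end Stmt17

open Stmt17

/-- Appendix B of the paper.  Let `K` be an imaginary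
quadratic field of discriminant `D` with ring of integers `ℤ[γ]`, where
`γ ≠ √-1` and `γ ≠ (1+√-3)/2` (equivalently, `D ≠ -4` and `D ≠ -3`).  Let `f`
be a positive integer, `ℓ` a prime dividing `f`, and `v_ℓ(f)` the `ℓ`-adic
valuation of `f`.  Then the number `niG(f, ℓ^n)` of non-invertible ideals of
norm `ℓ^n` in the order `ℤ + ℤfγ` satisfies
`niG(f, ℓ^n) = Σ_{1 ≤ k ≤ min(n, v_ℓ(f))} iG(f/ℓ^k, ℓ^{n-k})`,
where `iG(f', ℓ^m)` is the number of invertible ideals of norm `ℓ^m` in the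
order of conductor `f'`.  (The convention that the number of invertible ideals
of norm `1` is `1` holds by definition here, the unit ideal being the unique
ideal of norm `1` and being invertible.) -/
theorem count_noninvertible_ideals_of_prime_power_norm
    (K : Type) [Field K] [NumberField K]
    (hdeg : Module.finrank ℚ K = 2) (himag : IsEmpty (K →+* ℝ))
    (γ : K) (hγ : ∀ x : K, IsIntegral ℤ x ↔ x ∈ Algebra.adjoin ℤ {γ})
    (hD3 : NumberField.discr K ≠ -3) (hD4 : NumberField.discr K ≠ -4)
    (f : ℕ) (hf : 0 < f) (ℓ : ℕ) (hℓ : Fact ℓ.Prime) (hlf : ℓ ∣ f) (n : ℕ) :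
    niG K γ f ℓ n =
      ∑ k ∈ Finset.Icc 1 (min n (padicValNat ℓ f)), iG K γ (f / ℓ ^ k) ℓ (n - k) := by
  classical
  have hint : IsIntegral ℤ γ := (hγ γ).mpr (Algebra.self_mem_adjoin_singleton ℤ γ)
  -- γ is not rational
  have hnotrange : γ ∉ (algebraMap ℚ K).range := by
    intro hmem
    have hF : ∀ x : K, IsIntegral ℤ x → x ∈ Submodule.span ℚ ({1} : Set K) := by
      intro x hx
      have hx' := (hγ x).mp hx
      clear hx
      induction hx' using Algebra.adjoin_induction with
      | mem y hy =>
        rcases Set.mem_singleton_iff.mp hy with rfl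
        obtain ⟨q, hq⟩ := hmem
        exact Submodule.mem_span_singleton.mpr ⟨q, by rw [Algebra.smul_def, mul_one, hq]⟩
      | algebraMap r =>
        refine Submodule.mem_span_singleton.mpr ⟨(r : ℚ), ?_⟩
        rw [Algebra.smul_def, mul_one]
        simp
      | add x y _ _ ihx ihy => exact Submodule.add_mem _ ihx ihy
      | mul x y _ _ ihx ihy =>
        obtain ⟨q1, hq1⟩ := Submodule.mem_span_singleton.mp ihx
        obtain ⟨q2, hq2⟩ := Submodule.mem_span_singleton.mp ihy
        refine Submodule.mem_span_singleton.mpr ⟨q1 * q2, ?_⟩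
        rw [← hq1, ← hq2]
        simp only [Algebra.smul_def, mul_one]
        rw [map_mul]
        try ring
    have hspan : ∀ w : K, ∃ c : ℚ, c • (1 : K) = w := by
      intro w
      have hw : w ∈ Submodule.span ℚ (Set.range (NumberField.integralBasis K)) := by
        rw [Module.Basis.span_eq]; trivial
      have hle : Submodule.span ℚ (Set.range (NumberField.integralBasis K)) ≤
          Submodule.span ℚ ({1} : Set K) := by
        rw [Submodule.span_le]
        rintro z ⟨i, rfl⟩
        rw [NumberField.integralBasis_apply]
        exact hF _ (NumberField.RingOfIntegers.isIntegral_coe _)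
      exact Submodule.mem_span_singleton.mp (hle hw)
    have hone := finrank_le_one (1 : K) hspan
    rw [hdeg] at hone
    omega
  -- the quadratic relation
  have hQint : IsIntegral ℚ γ := IsIntegral.of_finite ℚ γ
  have hdeg2 : (minpoly ℚ γ).natDegree = 2 := by
    have hle : (minpoly ℚ γ).natDegree ≤ 2 := hdeg ▸ minpoly.natDegree_le γ
    have hge : 2 ≤ (minpoly ℚ γ).natDegree := (minpoly.two_le_natDegree_iff hQint).mpr hnotrange
    omega
  have hinj : Function.Injective (algebraMap ℤ ℚ) := fun a b h => by exact_mod_cast h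
  have hZdeg : (minpoly ℤ γ).natDegree = 2 := by
    have hmap : minpoly ℚ γ = (minpoly ℤ γ).map (algebraMap ℤ ℚ) :=
      minpoly.isIntegrallyClosed_eq_field_fractions' ℚ hint
    rw [hmap, Polynomial.natDegree_map_eq_of_injective hinj] at hdeg2
    exact hdeg2
  set p : Polynomial ℤ := minpoly ℤ γ with hpdef
  set t : ℤ := -(p.coeff 1) with htdef
  set m : ℤ := p.coeff 0 with hmdef
  have hmonic : p.Monic := minpoly.monic hint
  have haev : (Polynomial.aeval γ) p = 0 := minpoly.aeval ℤ γ
  have hrel : γ * γ = (t : K) * γ - (m : K) := by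
    have hsum := Polynomial.aeval_eq_sum_range (p := p) γ
    rw [hZdeg, haev] at hsum
    have hlead : p.coeff 2 = 1 := by
      have h := hmonic
      rw [Polynomial.Monic, Polynomial.leadingCoeff, hZdeg] at h
      exact h
    rw [Finset.sum_range_succ, Finset.sum_range_succ, Finset.sum_range_one, hlead] at hsum
    simp only [zsmul_eq_mul, pow_zero, pow_one, mul_one, one_mul, Int.cast_one] at hsum
    rw [htdef, hmdef]
    push_cast
    linear_combination -hsum
  have hind : ∀ u v : ℤ, (u : K) + (v : K) * γ = 0 → u = 0 ∧ v = 0 := by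
    intro u v huv
    by_cases hv : v = 0
    · subst hv
      push_cast at huv
      rw [zero_mul, add_zero] at huv
      exact ⟨by exact_mod_cast huv, rfl⟩
    · exfalso
      apply hnotrange
      refine ⟨(-(u : ℚ)) / (v : ℚ), ?_⟩
      have hvK : ((v : ℤ) : K) ≠ 0 := Int.cast_ne_zero.mpr hv
      rw [map_div₀, map_neg, map_intCast, map_intCast, div_eq_iff hvK]
      linear_combination -huv
  have hcls : ∀ x : K, IsIntegral ℤ x → x ∈ Algebra.adjoin ℤ {γ} := fun x hx => (hγ x).mp hx
  let C : Ctx K := ⟨γ, t, m, hrel, hind, hcls⟩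
  have hs : 0 < ℓ ^ n := pow_pos hℓ.out.pos n
  have h1 : niG K γ f ℓ n
      = ((C.Tri f (ℓ ^ n)).filter (fun τ => C.gc f (τ.1 : ℤ) (τ.2.1 : ℤ) ≠ 1)).card :=
    C.count_noninv f hf hs
  rw [h1, C.count_split f ℓ n hf hℓ.out]
  refine Finset.sum_congr rfl (fun k hk => ?_)
  rw [Finset.mem_Icc] at hk
  have hdvd : ℓ ^ k ∣ f := dvd_trans (pow_dvd_pow ℓ (le_trans hk.2 (min_le_right _ _)))
    pow_padicValNat_dvd
  have hd0 : 0 < f / ℓ ^ k := Nat.div_pos (Nat.le_of_dvd hf hdvd) (pow_pos hℓ.out.pos k)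
  exact (C.count_inv (f / ℓ ^ k) hd0 (pow_pos hℓ.out.pos (n - k))).symm
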